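/- Let S be a finite commutative ring and suppose that for every maximal ideal m of S, writing S_m for the localization of S at m and κ(m) for the residue field of S_m, the κ(m)-vector space Hom_{S_m}(κ(m), S_m) of S_m-linear maps from κ(m) to S_m is one-dimensional. Then every faithful S-module M contains an S-submodule free of rank 1 over S; i.e., there exists x ∈ M such that the map S → M sending t to t·x is injective. -/

import Mathlib

theorem aux_kill (S : Type*) [CommRing S] (m : Ideal S) (hm : m.IsMaximal) (a : S)
    (ha : ∀ s ∈ m, s * a = 0) {u : S} (hu : u ∉ m) (h : u * a = 0) : a = 0 := by
  obtain ⟨v, i, hi, hvi⟩ := hm.exists_inv hu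
  have h2 : a = v * (u * a) + i * a := by
    calc a = (v * u + i) * a := by rw [hvi, one_mul]
    _ = v * (u * a) + i * a := by ring
  rw [h2, h, ha i hi, mul_zero, add_zero]

theorem aux_fin (S : Type*) [CommRing S] [Finite S] : Finite (Ideal S) :=
  Finite.of_injective (fun I : Ideal S => (I : Set S)) SetLike.coe_injective

theorem aux_J_ne_zero (S : Type*) [CommRing S] [Finite S] (m : Ideal S) (hm : m.IsMaximal) :
    ∃ a : S, a ≠ 0 ∧ ∀ s ∈ m, s * a = 0 := by
  haveI : Finite (Ideal S) := aux_fin S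
  obtain ⟨i, j, hij, hpow⟩ := Finite.exists_ne_map_eq_of_infinite (fun n : ℕ => m ^ n)
  wlog hlt : i < j generalizing i j
  · exact this j i hij.symm hpow.symm (by omega)
  have hle : m ^ i ≤ m • (m ^ i) := by
    rw [Ideal.smul_eq_mul, ← pow_succ']
    rw [hpow]
    exact Ideal.pow_le_pow_right (by omega)
  have hfg : (m ^ i).FG := by
    refine ⟨(Set.toFinite ((m ^ i : Ideal S) : Set S)).toFinset, ?_⟩
    rw [Set.Finite.coe_toFinset]
    exact Ideal.span_eq _
  obtain ⟨r, hr1, hr⟩ :=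
    Submodule.exists_sub_one_mem_and_smul_eq_zero_of_fg_of_le_smul m (m ^ i) hfg hle
  by_contra hcon
  have hcon' : ∀ a : S, (∀ s ∈ m, s * a = 0) → a = 0 := by
    intro a h
    by_contra h0
    exact hcon ⟨a, h0, h⟩
  have Q : ∀ k : ℕ, (∀ b ∈ m ^ k, r * b = 0) → r = 0 := by
    intro k
    induction k with
    | zero => intro h; simpa using h 1 (by simp)
    | succ k ih =>
      intro h
      refine ih ?_
      intro b hb
      refine hcon' (r * b) ?_
      intro s hs
      have hmem : b * s ∈ m ^ (k + 1) := by
        rw [pow_succ]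
        exact Ideal.mul_mem_mul hb hs
      linear_combination h (b * s) hmem
  have hr0 : r = 0 := Q i fun b hb => by simpa [smul_eq_mul] using hr b hb
  rw [hr0, zero_sub] at hr1
  exact hm.ne_top (m.eq_top_iff_one.mpr (by simpa using m.neg_mem hr1))

open IsLocalRing in
theorem aux_soc_one_dim (L : Type*) [CommRing L] [IsLocalRing L]
    (hgor : ∃ φ : ResidueField L →ₗ[L] L, φ ≠ 0 ∧
      ∀ ψ : ResidueField L →ₗ[L] L, ∃ c : ResidueField L, ∀ x, ψ x = φ (c * x))
    (α β : L) (hα : ∀ z ∈ maximalIdeal L, z * α = 0) (hα0 : α ≠ 0)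
    (hβ : ∀ z ∈ maximalIdeal L, z * β = 0) :
    ∃ d : L, β = d * α := by
  obtain ⟨φ, hφ0, hφ⟩ := hgor
  have mkψ : ∀ γ : L, (∀ z ∈ maximalIdeal L, z * γ = 0) →
      ∃ ψ : ResidueField L →ₗ[L] L, ψ 1 = γ := by
    intro γ h
    refine ⟨Submodule.liftQ (maximalIdeal L) (LinearMap.toSpanSingleton L L γ) ?_, ?_⟩
    · intro z hz
      simpa [LinearMap.toSpanSingleton_apply, smul_eq_mul] using h z hz
    · show Submodule.liftQ _ _ _ (Submodule.Quotient.mk 1) = γ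
      rw [Submodule.liftQ_apply, LinearMap.toSpanSingleton_apply, one_smul]
  obtain ⟨ψα, hψα⟩ := mkψ α hα
  obtain ⟨ψβ, hψβ⟩ := mkψ β hβ
  obtain ⟨cα, hcα⟩ := hφ ψα
  obtain ⟨cβ, hcβ⟩ := hφ ψβ
  have hA : α = φ cα := by rw [← hψα, hcα, mul_one]
  have hB : β = φ cβ := by rw [← hψβ, hcβ, mul_one]
  have hcα0 : cα ≠ 0 := by
    intro h
    apply hα0
    rw [hA, h, map_zero]
  obtain ⟨d, hd⟩ := residue_surjective (R := L) (cβ * cα⁻¹)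
  refine ⟨d, ?_⟩
  have h1 : cβ = (residue L d) * cα := by
    rw [hd, mul_assoc, inv_mul_cancel₀ hcα0, mul_one]
  have h2 : (residue L d) * cα = d • cα := by
    obtain ⟨z, rfl⟩ := residue_surjective (R := L) cα
    rw [← map_mul]
    rfl
  rw [hB, h1, h2, map_smul, ← hA, smul_eq_mul]

open IsLocalRing in
theorem aux_J_one_dim (S : Type*) [CommRing S] (m : Ideal S) [hm : m.IsMaximal]
    (hgor : ∃ φ : ResidueField (Localization.AtPrime m) →ₗ[Localization.AtPrime m]
          Localization.AtPrime m, φ ≠ 0 ∧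
        ∀ ψ : ResidueField (Localization.AtPrime m) →ₗ[Localization.AtPrime m]
            Localization.AtPrime m,
          ∃ c : ResidueField (Localization.AtPrime m), ∀ x, ψ x = φ (c * x))
    (a b : S) (ha0 : a ≠ 0) (ha : ∀ s ∈ m, s * a = 0) (hb : ∀ s ∈ m, s * b = 0) :
    ∃ t : S, b = t * a := by
  set L := Localization.AtPrime m with hL
  -- elements of J_m map into the socle of L
  have soc : ∀ (c : S), (∀ s ∈ m, s * c = 0) →
      ∀ z ∈ maximalIdeal L, z * algebraMap S L c = 0 := by
    intro c hc z hz
    obtain ⟨⟨s, u⟩, rfl⟩ := IsLocalization.mk'_surjective m.primeCompl z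
    have hs : s ∈ m := by
      by_contra hs
      exact (mem_nonunits_iff.mp ((IsLocalRing.mem_maximalIdeal _).mp hz))
        (IsUnit.of_mul_eq_one _ (IsLocalization.mk'_mul_mk'_eq_one' (S := L) s u hs))
    have hu : IsUnit (algebraMap S L (u : S)) := IsLocalization.map_units L u
    refine hu.mul_right_cancel ?_
    calc IsLocalization.mk' L s u * algebraMap S L c * algebraMap S L (u : S)
        = (IsLocalization.mk' L s u * algebraMap S L (u : S)) * algebraMap S L c := by ring
      _ = algebraMap S L s * algebraMap S L c := by rw [IsLocalization.mk'_spec]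
      _ = algebraMap S L (s * c) := (map_mul _ s c).symm
      _ = 0 * algebraMap S L (u : S) := by rw [hc s hs, map_zero, zero_mul]
  -- a maps to a nonzero element
  have hfa : algebraMap S L a ≠ 0 := by
    intro h0
    obtain ⟨u, hu⟩ := (IsLocalization.map_eq_zero_iff m.primeCompl L a).mp h0
    exact ha0 (aux_kill S m hm a ha u.2 hu)
  obtain ⟨d, hd⟩ := aux_soc_one_dim L hgor _ _ (soc a ha) hfa (soc b hb)
  obtain ⟨⟨c, u⟩, rfl⟩ := IsLocalization.mk'_surjective m.primeCompl d
  -- u * b and c * a have the same image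
  have key : algebraMap S L ((u : S) * b - c * a) = 0 := by
    rw [map_sub, map_mul, map_mul, sub_eq_zero, mul_comm (algebraMap S L (u : S))]
    rw [hd]
    calc IsLocalization.mk' L c u * algebraMap S L a * algebraMap S L (u : S)
        = (IsLocalization.mk' L c u * algebraMap S L (u : S)) * algebraMap S L a := by ring
      _ = algebraMap S L c * algebraMap S L a := by rw [IsLocalization.mk'_spec]
  obtain ⟨v, hv⟩ := (IsLocalization.map_eq_zero_iff m.primeCompl L _).mp key
  have hvu : (v : S) * (u : S) ∉ m := fun h =>
    ((m.primeCompl).mul_mem v.2 u.2 : (v : S) * (u : S) ∈ m.primeCompl) h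
  have hvb : ((v : S) * (u : S)) * b = ((v : S) * c) * a := by
    linear_combination hv
  obtain ⟨w, i, hi, hwi⟩ := hm.exists_inv hvu
  refine ⟨w * ((v : S) * c), ?_⟩
  calc b = (w * ((v : S) * (u : S)) + i) * b := by rw [hwi, one_mul]
    _ = w * (((v : S) * (u : S)) * b) + i * b := by ring
    _ = w * (((v : S) * c) * a) + 0 := by rw [hvb, hb i hi]
    _ = w * ((v : S) * c) * a := by ring

theorem aux_min (S : Type*) [CommRing S] [Finite S] {M : Type*} [AddCommGroup M] [Module S M]
    (x : M) (t : S) (ht0 : t ≠ 0) (htx : t • x = 0) :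
    ∃ (m : Ideal S) (a : S), m.IsMaximal ∧ a ≠ 0 ∧ a • x = 0 ∧ ∀ s ∈ m, s * a = 0 := by
  haveI : Finite (Ideal S) := aux_fin S
  set P : Ideal S → Prop := fun K => K ≠ ⊥ ∧ ∀ b ∈ K, b • x = 0 with hP
  have hPt : P (Ideal.span {t}) := by
    constructor
    · simpa [Ideal.span_singleton_eq_bot] using ht0
    · intro b hb
      obtain ⟨s, rfl⟩ := Ideal.mem_span_singleton'.mp hb
      rw [mul_smul, htx, smul_zero]
  obtain ⟨K, hK, hmin⟩ := wellFounded_lt.has_min {K | P K} ⟨_, hPt⟩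
  obtain ⟨a, haK, ha0⟩ := Submodule.exists_mem_ne_zero_of_ne_bot hK.1
  have hax : a • x = 0 := hK.2 a haK
  have key : ∀ u : S, u * a ≠ 0 → ∃ s, s * (u * a) = a := by
    intro u hu
    have h1 : Ideal.span {u * a} ≤ K := by
      rw [Ideal.span_le, Set.singleton_subset_iff]
      exact K.mul_mem_left u haK
    have h2 : P (Ideal.span {u * a}) := by
      constructor
      · simpa [Ideal.span_singleton_eq_bot] using hu
      · intro b hb
        obtain ⟨s, rfl⟩ := Ideal.mem_span_singleton'.mp hb
        rw [mul_smul, mul_smul, hax, smul_zero, smul_zero]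
    have heq : Ideal.span {u * a} = K := by
      by_contra hne
      exact hmin _ h2 (lt_of_le_of_ne h1 hne)
    obtain ⟨s, hs⟩ := Ideal.mem_span_singleton'.mp (heq ▸ haK)
    exact ⟨s, hs⟩
  refine ⟨LinearMap.ker (LinearMap.toSpanSingleton S S a), a, ?_, ha0, hax, ?_⟩
  · rw [Ideal.isMaximal_iff]
    constructor
    · intro h1
      rw [LinearMap.mem_ker, LinearMap.toSpanSingleton_apply, one_smul] at h1
      exact ha0 h1
    · intro J y hle hy hyJ
      have hya : y * a ≠ 0 := by
        intro h
        exact hy (by rw [LinearMap.mem_ker, LinearMap.toSpanSingleton_apply, smul_eq_mul]; exact h)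
      obtain ⟨s, hs⟩ := key y hya
      have h1 : 1 - s * y ∈ J := by
        refine hle ?_
        rw [LinearMap.mem_ker, LinearMap.toSpanSingleton_apply, smul_eq_mul]
        linear_combination -hs
      have h2 : s * y ∈ J := J.mul_mem_left s hyJ
      simpa using J.add_mem h1 h2
  · intro s hs
    rw [LinearMap.mem_ker, LinearMap.toSpanSingleton_apply, smul_eq_mul] at hs
    exact hs




/-- Let `S` be a finite commutative ring and suppose that for every maximal
ideal `m` of `S`, writing `S_m` for the localization of `S` at `m` and `κ(m)` for the residue
field of `S_m`, the `κ(m)`-vector space `Hom_{S_m}(κ(m), S_m)` is one-dimensional (i.e. there is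
a nonzero `S_m`-linear map `φ : κ(m) → S_m` such that every `S_m`-linear map `ψ : κ(m) → S_m` is
a `κ(m)`-multiple of `φ`).  Then every faithful `S`-module `M` contains an `S`-submodule free of
rank `1` over `S`: there exists `x ∈ M` such that `t ↦ t • x` is injective. -/
theorem finite_gorenstein_ring_faithful_module_contains_free_rank_one
    (S : Type*) [CommRing S] [Finite S]
    (hgor : ∀ (m : Ideal S) [m.IsMaximal],
      ∃ φ : IsLocalRing.ResidueField (Localization.AtPrime m) →ₗ[Localization.AtPrime m]
          Localization.AtPrime m, φ ≠ 0 ∧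
        ∀ ψ : IsLocalRing.ResidueField (Localization.AtPrime m) →ₗ[Localization.AtPrime m]
            Localization.AtPrime m,
          ∃ c : IsLocalRing.ResidueField (Localization.AtPrime m),
            ∀ x, ψ x = φ (c * x))
    (M : Type*) [AddCommGroup M] [Module S M]
    (hfaith : ∀ t : S, (∀ x : M, t • x = 0) → t = 0) :
    ∃ x : M, Function.Injective fun t : S => t • x := by
  haveI : Finite (Ideal S) := aux_fin S
  haveI : Fintype {m : Ideal S // m.IsMaximal} := Fintype.ofFinite _
  classical
  -- choose a nonzero socle element for each maximal ideal
  choose a ha0 haJ using fun i : {m : Ideal S // m.IsMaximal} => aux_J_ne_zero S i.1 i.2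
  -- choose "idempotent-like" elements c i
  have hcex : ∀ i : {m : Ideal S // m.IsMaximal},
      ∃ c : S, c ∉ i.1 ∧ ∀ j : {m : Ideal S // m.IsMaximal}, j ≠ i → c ∈ j.1 := by
    intro i
    have hnle : ¬ (∏ j ∈ Finset.univ.erase i, j.1) ≤ i.1 := by
      intro hle
      obtain ⟨j, hj, hji⟩ := (Ideal.IsPrime.prod_le i.2.isPrime).mp hle
      have : j.1 = i.1 := j.2.eq_of_le i.2.ne_top hji
      exact (Finset.mem_erase.mp hj).1 (Subtype.ext this)
    obtain ⟨c, hc1, hc2⟩ := SetLike.not_le_iff_exists.mp hnle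
    refine ⟨c, hc2, ?_⟩
    intro j hj
    have hle : (∏ k ∈ Finset.univ.erase i, k.1) ≤ j.1 :=
      le_trans Ideal.prod_le_inf (Finset.inf_le (Finset.mem_erase.mpr ⟨hj, Finset.mem_univ j⟩))
    exact hle hc1
  choose c hc1 hc2 using hcex
  -- a i * c i is nonzero
  have hac : ∀ i, a i * c i ≠ 0 := by
    intro i h
    exact ha0 i (aux_kill S i.1 i.2 (a i) (haJ i) (hc1 i) (by rw [mul_comm]; exact h))
  -- choose z i with (a i * c i) • z i ≠ 0
  have hzex : ∀ i, ∃ z : M, (a i * c i) • z ≠ 0 := by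
    intro i
    by_contra h
    push_neg at h
    exact hac i (hfaith _ fun z => h z)
  choose z hz using hzex
  set x : M := ∑ i, c i • z i with hx
  have hax : ∀ i, a i • x ≠ 0 := by
    intro i
    have h1 : a i • x = ∑ j, (a i * c j) • z j := by
      rw [hx, Finset.smul_sum]
      exact Finset.sum_congr rfl fun j _ => (smul_smul _ _ _)
    rw [h1, Finset.sum_eq_single i]
    · exact hz i
    · intro j _ hji
      have hcj : c j ∈ i.1 := hc2 j i (fun h => hji h.symm) -- j ≠ i needs hji
      have : a i * c j = 0 := by rw [mul_comm]; exact haJ i _ hcj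
      rw [this, zero_smul]
    · intro h
      exact absurd (Finset.mem_univ i) h
  refine ⟨x, ?_⟩
  intro t t' h
  simp only at h
  by_contra hne
  have hd0 : t - t' ≠ 0 := sub_ne_zero.mpr hne
  have hdx : (t - t') • x = 0 := by rw [sub_smul, h, sub_self]
  obtain ⟨m, b, hm, hb0, hbx, hbJ⟩ := aux_min S x (t - t') hd0 hdx
  set i : {m : Ideal S // m.IsMaximal} := ⟨m, hm⟩ with hi
  haveI := hm
  obtain ⟨s, hs⟩ := aux_J_one_dim S m (hgor m) b (a i) hb0 hbJ (haJ i)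
  apply hax i
  rw [hs, mul_smul, hbx, smul_zero]
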